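/- arXiv:0811.0636 — 5 statements merged into one kernel-verified Lean document; each statement's English description precedes it below -/
import Mathlib

section
/- Let R be a commutative ring, M an R-module, and let ι : M → Λ(M) denote the canonical inclusion of M into its exterior algebra. Let u, w ∈ M, let μ ∈ R, let k ≥ 1 be a natural number, and let t ∈ Λ(M) be an element that commutes with ι(w) * ι(u). Then (μ • ι(u)) * (ι(w) * ι(u) + μ • t)^(k-1) = μ^k • (ι(u) * t^(k-1)). -/
open ExteriorAlgebra

/-- Homogeneity identity (2.1): if `t` commutes with `ι w * ι u`, then
`(μ • ι u) * (ι w * ι u + μ • t) ^ (k - 1) = μ ^ k • (ι u * t ^ (k - 1))`. -/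
theorem bochner_martinelli_homogeneity
    (R : Type*) [CommRing R] (M : Type*) [AddCommGroup M] [Module R M]
    (u w : M) (μ : R) (k : ℕ) (hk : 1 ≤ k) (t : ExteriorAlgebra R M)
    (ht : Commute (ι R w * ι R u) t) :
    (μ • ι R u) * (ι R w * ι R u + μ • t) ^ (k - 1)
      = μ ^ k • (ι R u * t ^ (k - 1)) := by
  obtain ⟨n, rfl⟩ : ∃ n, k = n + 1 := ⟨k - 1, (Nat.succ_pred_eq_of_pos hk).symm⟩
  simp only [Nat.add_sub_cancel]
  set a := ι R w * ι R u with ha_def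
  have hua : ι R u * a = 0 := by
    have h : ι R u * ι R w = -a :=
      eq_neg_of_add_eq_zero_left (ι_add_mul_swap (R := R) u w)
    rw [ha_def, ← mul_assoc, h, ha_def, neg_mul, mul_assoc, ι_sq_zero, mul_zero,
      neg_zero]
  have key : ∀ m : ℕ, ι R u * (a + μ • t) ^ m = μ ^ m • (ι R u * t ^ m) := by
    intro m
    induction m with
    | zero => simp
    | succ m ih =>
      rw [pow_succ, ← mul_assoc, ih, smul_mul_assoc, mul_add,
        mul_smul_comm]
      have hcomm : t ^ m * a = a * t ^ m := ((ht.pow_right m).symm).eq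
      rw [mul_assoc, hcomm, ← mul_assoc, hua, zero_mul, zero_add]
      simp [smul_smul, pow_succ, mul_assoc]
  rw [smul_mul_assoc, key n, smul_smul, pow_succ']
end

section
/- Let R be a commutative ring, M an R-module, and ι : M → Λ(M) the canonical inclusion into the exterior algebra. Let n ≥ 1, let c : Fin n → R, v : Fin n → M, and fix j ∈ Fin n. Then c_j • ∏_{k ≠ j} ι(c_j • v_k − c_k • v_j) = c_j^{n−1} • ∑_{l=0}^{n−1} (−1)^{l+j} c_l • ∏_{m ≠ l} ι(v_m), where each product over a set of indices is taken in increasing order of the indices. -/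
open ExteriorAlgebra

section helpers

variable {R : Type*} [CommRing R] {A : Type*} [Ring A] [Algebra R A] {κ : Type*}

lemma move_x (x : A) (a : κ → A) (hax : ∀ k, x * a k = -(a k * x)) :
    ∀ L : List κ, x * (L.map a).prod = ((-1 : R) ^ L.length) • ((L.map a).prod * x)
  | [] => by simp
  | k :: L => by
    have ih := move_x x a hax L
    simp only [List.map_cons, List.prod_cons, List.length_cons]
    rw [← mul_assoc, hax k, neg_mul, mul_assoc, ih, mul_smul_comm, ← mul_assoc, ← neg_smul,
      pow_succ]
    ring_nf

lemma mul_insert (x : A) (a : κ → A) (hax : ∀ k, x * a k = -(a k * x)) (L1 L2 : List κ) :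
    x * ((L1 ++ L2).map a).prod
      = ((-1 : R) ^ L1.length) • ((L1.map a).prod * x * ((L2.map a).prod)) := by
  rw [List.map_append, List.prod_append, ← mul_assoc, move_x (R := R) x a hax L1, smul_mul_assoc,
    mul_assoc]

lemma expand_prod (x : A) (hx : x * x = 0) (a : κ → A) (hax : ∀ k, x * a k = -(a k * x))
    (c : κ → R) (cj : R) :
    ∀ L : List κ, (L.map (fun k => cj • a k - c k • x)).prod
      = cj ^ L.length • (L.map a).prod
        + ∑ i : Fin L.length, ((-1 : R) ^ ((i : ℕ) + 1) * c (L.get i) * cj ^ (L.length - 1))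
            • (x * ((L.eraseIdx (i : ℕ)).map a).prod) := by
  intro L
  induction L with
  | nil => simp
  | cons k L ih =>
    have hxF : x * (L.map (fun k => cj • a k - c k • x)).prod
        = cj ^ L.length • (x * (L.map a).prod) := by
      rw [ih, mul_add, mul_smul_comm, Finset.mul_sum]
      simp only [mul_smul_comm, ← mul_assoc, hx, zero_mul, smul_zero, Finset.sum_const_zero,
        add_zero]
    have haF : a k * (L.map (fun k => cj • a k - c k • x)).prod
        = cj ^ L.length • (a k * (L.map a).prod)
          - ∑ i : Fin L.length, ((-1 : R) ^ ((i : ℕ) + 1) * c (L.get i) * cj ^ (L.length - 1))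
              • (x * (a k * ((L.eraseIdx (i : ℕ)).map a).prod)) := by
      rw [ih, mul_add, mul_smul_comm, Finset.mul_sum, sub_eq_add_neg, ← Finset.sum_neg_distrib]
      congr 1
      refine Finset.sum_congr rfl fun i _ => ?_
      have hkx : a k * x = -(x * a k) := by rw [hax k, neg_neg]
      rw [mul_smul_comm, ← mul_assoc, hkx, neg_mul, smul_neg, mul_assoc x (a k)]
    simp only [List.map_cons, List.prod_cons, List.length_cons, sub_mul, smul_mul_assoc,
      hxF, haF]
    rw [Fin.sum_univ_succ]
    simp only [List.get_cons_zero, List.eraseIdx_cons_zero, List.get_cons_succ', Fin.val_succ,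
      List.eraseIdx_cons_succ, List.map_cons, List.prod_cons, Fin.val_zero,
      Nat.add_sub_cancel]
    have hsum : ∑ i : Fin L.length, ((-1 : R) ^ ((i : ℕ) + 1 + 1) * c (L.get i) * cj ^ L.length)
          • (x * (a k * ((L.eraseIdx (i : ℕ)).map a).prod))
        = cj • ∑ i : Fin L.length,
            -(((-1 : R) ^ ((i : ℕ) + 1) * c (L.get i) * cj ^ (L.length - 1))
              • (x * (a k * ((L.eraseIdx (i : ℕ)).map a).prod))) := by
      rw [Finset.smul_sum]
      refine Finset.sum_congr rfl fun i _ => ?_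
      rw [smul_neg, smul_smul, ← neg_smul]
      congr 1
      have h1 : L.length - 1 + 1 = L.length := Nat.succ_pred_eq_of_pos i.pos
      have h2 : cj ^ L.length = cj * cj ^ (L.length - 1) := by
        conv_lhs => rw [← h1]
        rw [pow_succ']
      rw [h2]
      ring
    rw [hsum]
    rw [smul_sub, smul_smul, ← pow_succ', Finset.sum_neg_distrib, smul_neg]
    module

lemma erase_eq_eraseIdx_indexOf {α : Type*} [DecidableEq α] :
    ∀ (L : List α), ∀ b ∈ L, L.erase b = L.eraseIdx (L.idxOf b)
  | [], b, hb => by simp at hb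
  | c :: T, b, hb => by
    by_cases hcb : c = b
    · subst hcb
      simp [List.idxOf_cons_self]
    · rw [List.erase_cons_tail (by simpa using hcb), List.idxOf_cons_ne _ (hcb),
        List.eraseIdx_cons_succ,
        erase_eq_eraseIdx_indexOf T b (by cases hb with
          | head => exact absurd rfl hcb
          | tail _ h => exact h)]

lemma mul_erase [DecidableEq κ] (x : A) (a : κ → A) (hax : ∀ k, x * a k = -(a k * x))
    (L : List κ) (jj : κ) (hj : jj ∈ L) (hxj : a jj = x) :
    x * ((L.erase jj).map a).prod = ((-1 : R) ^ (L.idxOf jj)) • (L.map a).prod := by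
  have hp : L.idxOf jj < L.length := List.idxOf_lt_length_iff.2 hj
  have hget : L[L.idxOf jj] = jj := List.getElem_idxOf hp
  have h1 : L.erase jj = L.take (L.idxOf jj) ++ L.drop (L.idxOf jj + 1) := by
    rw [erase_eq_eraseIdx_indexOf L jj hj, List.eraseIdx_eq_take_drop_succ]
  have h2 : L = L.take (L.idxOf jj) ++ jj :: L.drop (L.idxOf jj + 1) := by
    conv_lhs => rw [← List.take_append_drop (L.idxOf jj) L, List.drop_eq_getElem_cons hp, hget]
  rw [h1, mul_insert (R := R) x a hax, List.length_take, Nat.min_eq_left hp.le]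
  congr 1
  conv_rhs => rw [h2]
  rw [List.map_append, List.prod_append, List.map_cons, List.prod_cons, hxj, mul_assoc]

lemma sorted_indexOf {α : Type*} [LinearOrder α] [DecidableEq α] :
    ∀ (L : List α), L.Pairwise (· < ·) → ∀ b ∈ L,
      L.idxOf b = (L.filter (fun x => x < b)).length
  | [], _, b, hb => by simp at hb
  | c :: T, hL, b, hb => by
    rcases List.pairwise_cons.mp hL with ⟨hcT, hT⟩
    by_cases hcb : c = b
    · subst hcb
      rw [List.idxOf_cons_self]
      rw [List.filter_cons_of_neg (by simp), List.filter_eq_nil_iff.2 fun x hx => ?_]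
      · rfl
      · simp only [decide_eq_true_eq]
        exact not_lt_of_gt (hcT x hx)
    · have hbT : b ∈ T := by
        cases hb with
        | head => exact absurd rfl hcb
        | tail _ h => exact h
      rw [List.idxOf_cons_ne _ hcb, List.filter_cons_of_pos (by simp [hcT b hbT]),
        List.length_cons, sorted_indexOf T hT b hbT]

lemma sort_erase {α : Type*} [LinearOrder α] [DecidableEq α] (s : Finset α) (b : α) :
    (s.sort (· ≤ ·)).erase b = (s.erase b).sort (· ≤ ·) := by
  refine List.Perm.eq_of_pairwise'
    (List.Pairwise.sublist List.erase_sublist (Finset.pairwise_sort s _))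
    (Finset.pairwise_sort _ _)
    (List.perm_of_nodup_nodup_toFinset_eq ((s.sort_nodup (· ≤ ·)).erase b)
      (Finset.sort_nodup _ _) ?_)
  ext z
  simp [List.Nodup.mem_erase_iff (Finset.sort_nodup s (· ≤ ·)), Finset.mem_erase,
    Finset.mem_sort]

lemma indexOf_sort {α : Type*} [LinearOrder α] [DecidableEq α] (s : Finset α) (b : α) (hb : b ∈ s) :
    (s.sort (· ≤ ·)).idxOf b = (s.filter (fun x => x < b)).card := by
  rw [sorted_indexOf _ (List.sortedLT_iff_pairwise.mp (Finset.sortedLT_sort s)) b ((Finset.mem_sort _).2 hb)]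
  have hnd : ((s.sort (· ≤ ·)).filter (fun x => x < b)).Nodup :=
    (Finset.sort_nodup _ _).filter _
  rw [← List.toFinset_card_of_nodup hnd, List.toFinset_filter, Finset.sort_toFinset]
  congr 1
  ext z
  simp

lemma filter_card {n : ℕ} (u w : Fin n) (h : u ≠ w) :
    ((Finset.univ.erase w).filter (fun x => x < u)).card
      = if u < w then (u : ℕ) else (u : ℕ) - 1 := by
  rw [Finset.filter_erase]
  have h1 : Finset.univ.filter (fun x => x < u) = Finset.Iio u := by
    ext z; simp
  rw [h1]
  by_cases hc : u < w
  · rw [Finset.erase_eq_of_notMem (by simp [Finset.mem_Iio, asymm hc]), if_pos hc, Fin.card_Iio]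
  · have hwu : w < u := lt_of_le_of_ne (not_lt.mp hc) h.symm
    rw [Finset.card_erase_of_mem (by simpa [Finset.mem_Iio] using hwu), if_neg hc, Fin.card_Iio]

end helpers

/-- The product of `g` over the indices in `s`, taken in increasing order of the indices. -/
noncomputable def orderedProd {R M : Type*} [CommRing R] [AddCommGroup M] [Module R M]
    {n : ℕ} (s : Finset (Fin n)) (g : Fin n → ExteriorAlgebra R M) : ExteriorAlgebra R M :=
  ((s.sort (· ≤ ·)).map g).prod

/-- Computational core of Lemma 3.6: for `c : Fin n → R`, `v : Fin n → M` and `j : Fin n`,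
`c j • ∏_{k ≠ j} ι (c j • v k - c k • v j)
  = c j ^ (n-1) • ∑ l, (-1)^(l+j) c l • ∏_{m ≠ l} ι (v m)`. -/
theorem euler_form_identity {R M : Type*} [CommRing R] [AddCommGroup M] [Module R M]
    {n : ℕ} (hn : 1 ≤ n) (c : Fin n → R) (v : Fin n → M) (j : Fin n) :
    c j • orderedProd (Finset.univ.erase j)
        (fun k => ι R (c j • v k - c k • v j)) =
      c j ^ (n - 1) •
        ∑ l : Fin n, ((-1 : R) ^ ((l : ℕ) + (j : ℕ)) * c l) •
          orderedProd (Finset.univ.erase l) (fun m => ι R (v m)) := by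
  simp only [orderedProd]
  set a : Fin n → ExteriorAlgebra R M := fun m => ι R (v m) with ha
  set x : ExteriorAlgebra R M := ι R (v j) with hxdef
  have hax : ∀ k, x * a k = -(a k * x) := fun k =>
    eq_neg_of_add_eq_zero_left (ι_add_mul_swap (v j) (v k))
  have hx : x * x = 0 := ι_sq_zero (v j)
  have hfun : (fun k => ι R (c j • v k - c k • v j)) = fun k => c j • a k - c k • x := by
    funext k
    rw [map_sub, map_smul, map_smul, ha, hxdef]
  set L0 := (Finset.univ.erase j).sort (· ≤ ·) with hL0
  have hnd : L0.Nodup := Finset.sort_nodup _ _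
  have hlen : L0.length = n - 1 := by
    rw [hL0, Finset.length_sort, Finset.card_erase_of_mem (Finset.mem_univ j),
      Finset.card_univ, Fintype.card_fin]
  rw [hfun, expand_prod x hx a hax c (c j) L0]
  -- convert the position-indexed sum into a sum over `univ.erase j`
  set g : Fin n → ExteriorAlgebra R M := fun l =>
    ((-1 : R) ^ (L0.idxOf l + 1) * c l * c j ^ (L0.length - 1))
      • (x * ((L0.erase l).map a).prod) with hg
  have hterm : ∀ i : Fin L0.length,
      ((-1 : R) ^ ((i : ℕ) + 1) * c (L0.get i) * c j ^ (L0.length - 1))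
          • (x * ((L0.eraseIdx (i : ℕ)).map a).prod)
        = g L0[(i : ℕ)] := by
    intro i
    have hmem : L0[(i : ℕ)] ∈ L0 := List.getElem_mem _
    have hlt : L0.idxOf L0[(i : ℕ)] < L0.length := List.idxOf_lt_length_iff.2 hmem
    have hidx : L0.idxOf L0[(i : ℕ)] = (i : ℕ) :=
      hnd.getElem_inj_iff.mp (List.getElem_idxOf hlt)
    rw [hg]
    simp only
    rw [hidx, erase_eq_eraseIdx_indexOf L0 _ hmem, hidx]
    rfl
  have htf : L0.toFinset = Finset.univ.erase j := by
    rw [hL0]; exact Finset.sort_toFinset _ _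
  rw [Finset.sum_congr rfl (fun i _ => hterm i), Fin.sum_univ_fun_getElem L0 g,
    ← List.sum_toFinset g hnd, htf]
  -- split off the `j` term on the right-hand side
  rw [← Finset.add_sum_erase _ _ (Finset.mem_univ j)]
  have hjj : (-1 : R) ^ ((j : ℕ) + (j : ℕ)) * c j = c j := by
    rw [← two_mul, pow_mul]
    simp
  rw [smul_add, smul_add, Finset.smul_sum, Finset.smul_sum]
  congr 1
  · -- the diagonal term
    rw [hjj, smul_smul, smul_smul, hlen, mul_comm]
  · -- the off-diagonal terms
    refine Finset.sum_congr rfl fun l hl => ?_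
    obtain ⟨hlj, -⟩ := Finset.mem_erase.mp hl
    have hn2 : 2 ≤ n := by
      have h1 := l.isLt
      have h2 := j.isLt
      have h3 : (l : ℕ) ≠ (j : ℕ) := fun h => hlj (Fin.ext h)
      omega
    set Ml := (Finset.univ.erase l).sort (· ≤ ·) with hMl
    have hjMl : j ∈ Ml := by
      rw [hMl, Finset.mem_sort, Finset.mem_erase]
      exact ⟨Ne.symm hlj, Finset.mem_univ j⟩
    have hec : (Finset.univ.erase j).erase l = (Finset.univ.erase l).erase j := by
      ext z
      simp only [Finset.mem_erase, Finset.mem_univ, and_true]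
      tauto
    have herase : L0.erase l = Ml.erase j := by
      rw [hL0, hMl, sort_erase, sort_erase, hec]
    have hmul : x * ((L0.erase l).map a).prod
        = ((-1 : R) ^ (Ml.idxOf j)) • (Ml.map a).prod := by
      rw [herase]
      exact mul_erase x a hax Ml j hjMl rfl
    have hidxl : L0.idxOf l = if l < j then (l : ℕ) else (l : ℕ) - 1 := by
      rw [hL0, indexOf_sort _ l (by simp [hlj]), filter_card l j hlj]
    have hidxj : Ml.idxOf j = if j < l then (j : ℕ) else (j : ℕ) - 1 := by
      rw [hMl, indexOf_sort _ j (by simp [Ne.symm hlj]), filter_card j l (Ne.symm hlj)]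
    rw [hmul, smul_smul, smul_smul, smul_smul, hidxl, hidxj]
    congr 1
    have hl1 : (l : ℕ) < n := l.isLt
    have hj1 : (j : ℕ) < n := j.isLt
    have hlvjv : (l : ℕ) ≠ (j : ℕ) := fun h => hlj (Fin.ext h)
    rcases lt_or_gt_of_ne hlvjv with hc | hc
    · rw [if_pos (show l < j from hc), if_neg (show ¬ j < l by rw [Fin.lt_def]; omega)]
      have e1 : ((-1 : R)) ^ ((l : ℕ) + 1) * (-1 : R) ^ ((j : ℕ) - 1)
          = (-1 : R) ^ ((l : ℕ) + (j : ℕ)) := by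
        rw [← pow_add]; congr 1; omega
      have e2 : c j * c j ^ (L0.length - 1) = c j ^ (n - 1) := by
        rw [← pow_succ']; congr 1; rw [hlen]; omega
      rw [← e1, ← e2]
      ring
    · rw [if_neg (show ¬ l < j by rw [Fin.lt_def]; omega), if_pos (show j < l from hc)]
      have e1 : ((-1 : R)) ^ ((l : ℕ) - 1 + 1) * (-1 : R) ^ ((j : ℕ))
          = (-1 : R) ^ ((l : ℕ) + (j : ℕ)) := by
        rw [← pow_add]; congr 1; omega
      have e2 : c j * c j ^ (L0.length - 1) = c j ^ (n - 1) := by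
        rw [← pow_succ']; congr 1; rw [hlen]; omega
      rw [← e1, ← e2]
      ring
end

section
/- Let R be a commutative ring, M an R-module, and ι : M → Λ(M) the canonical inclusion into the exterior algebra. Let n ≥ 1 and let c : Fin n → R and w, e : Fin n → M. Then (∑_{i} c_i • ι(e_i)) * (∑_{i} ι(w_i) * ι(e_i))^{n−1} = (n−1)! • ∑_{k} c_k • ( ι(e_k) * ∏_{i ≠ k} (ι(w_i) * ι(e_i)) ), where the product over i ≠ k is taken in increasing order of i (the factors ι(w_i) * ι(e_i) pairwise commute, so the order is immaterial). -/
open ExteriorAlgebra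

section Aux

variable {R M : Type*} [CommRing R] [AddCommGroup M] [Module R M] {n : ℕ}
  {g : Fin n → ExteriorAlgebra R M}

lemma orderedProd_empty (g : Fin n → ExteriorAlgebra R M) :
    orderedProd ∅ g = 1 := by simp [orderedProd]

lemma pairwise_commute_map (hcomm : ∀ i j, Commute (g i) (g j)) (l : List (Fin n)) :
    (l.map g).Pairwise Commute := by
  rw [List.pairwise_map]
  exact List.pairwise_of_forall_mem_list (fun a _ b _ => hcomm a b)

lemma commute_orderedProd {a : ExteriorAlgebra R M} (h : ∀ i, Commute a (g i))
    (s : Finset (Fin n)) : Commute a (orderedProd s g) :=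
  Commute.list_prod_right _ _ (by
    intro x hx
    obtain ⟨i, _, rfl⟩ := List.mem_map.mp hx
    exact h i)

lemma orderedProd_insert (hcomm : ∀ i j, Commute (g i) (g j)) {k : Fin n} {s : Finset (Fin n)}
    (hk : k ∉ s) : orderedProd (insert k s) g = g k * orderedProd s g := by
  unfold orderedProd
  have hperm : List.Perm (((insert k s).sort (· ≤ ·)).map g) ((k :: s.sort (· ≤ ·)).map g) := by
    refine List.Perm.map g ?_
    refine ((insert k s).sort_perm_toList _).trans ?_
    refine (Finset.toList_insert hk).trans ?_
    exact List.Perm.cons k (s.sort_perm_toList _).symm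
  rw [hperm.prod_eq' (pairwise_commute_map hcomm _)]
  simp

lemma orderedProd_erase (hcomm : ∀ i j, Commute (g i) (g j)) {k : Fin n} {s : Finset (Fin n)}
    (hk : k ∈ s) : orderedProd s g = g k * orderedProd (s.erase k) g := by
  conv_lhs => rw [← Finset.insert_erase hk]
  exact orderedProd_insert hcomm (Finset.notMem_erase k s)

lemma orderedProd_mul_self (hcomm : ∀ i j, Commute (g i) (g j))
    (hsq : ∀ i, g i * g i = 0) {k : Fin n} {s : Finset (Fin n)} (hk : k ∈ s) :
    orderedProd s g * g k = 0 := by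
  rw [orderedProd_erase hcomm hk, mul_assoc,
    ← (commute_orderedProd (fun i => hcomm k i) (s.erase k)).eq, ← mul_assoc, hsq,
    zero_mul]

/-- Multinomial-type expansion for pairwise-commuting square-zero elements. -/
lemma sum_pow_sq_zero (hcomm : ∀ i j, Commute (g i) (g j))
    (hsq : ∀ i, g i * g i = 0) (s : Finset (Fin n)) (m : ℕ) :
    (∑ i ∈ s, g i) ^ m =
      m.factorial • ∑ T ∈ s.powersetCard m, orderedProd T g := by
  induction m with
  | zero => simp [orderedProd_empty]
  | succ m ih =>
    rw [pow_succ, ih, smul_mul_assoc, Finset.sum_mul_sum]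
    have step : ∀ T ∈ s.powersetCard m, ∑ j ∈ s, orderedProd T g * g j
        = ∑ j ∈ s \ T, orderedProd (insert j T) g := by
      intro T hT
      have hTs : T ⊆ s := (Finset.mem_powersetCard.mp hT).1
      rw [← Finset.sum_sdiff hTs]
      have h1 : ∑ j ∈ T, orderedProd T g * g j = 0 :=
        Finset.sum_eq_zero fun j hj => orderedProd_mul_self hcomm hsq hj
      rw [h1, add_zero]
      refine Finset.sum_congr rfl fun j hj => ?_
      have hjT : j ∉ T := (Finset.mem_sdiff.mp hj).2
      rw [orderedProd_insert hcomm hjT,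
        (commute_orderedProd (fun i => hcomm j i) T).eq]
    rw [Finset.sum_congr rfl step]
    have key : ∑ T ∈ s.powersetCard m, ∑ j ∈ s \ T, orderedProd (insert j T) g
        = ∑ T' ∈ s.powersetCard (m + 1), ∑ j ∈ T', orderedProd T' g := by
      rw [Finset.sum_sigma', Finset.sum_sigma']
      refine Finset.sum_bij' (fun p _ => ⟨insert p.2 p.1, p.2⟩)
        (fun p _ => ⟨p.1.erase p.2, p.2⟩) ?_ ?_ ?_ ?_ ?_
      · rintro ⟨T, j⟩ hp
        simp only [Finset.mem_sigma] at hp ⊢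
        obtain ⟨hT, hj⟩ := hp
        obtain ⟨hTs, hTc⟩ := Finset.mem_powersetCard.mp hT
        obtain ⟨hjs, hjT⟩ := Finset.mem_sdiff.mp hj
        refine ⟨Finset.mem_powersetCard.mpr ⟨Finset.insert_subset hjs hTs, ?_⟩,
          Finset.mem_insert_self _ _⟩
        rw [Finset.card_insert_of_notMem hjT, hTc]
      · rintro ⟨T', j⟩ hp
        simp only [Finset.mem_sigma] at hp ⊢
        obtain ⟨hT', hj⟩ := hp
        obtain ⟨hTs, hTc⟩ := Finset.mem_powersetCard.mp hT'
        refine ⟨Finset.mem_powersetCard.mpr ⟨(Finset.erase_subset _ _).trans hTs, ?_⟩,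
          Finset.mem_sdiff.mpr ⟨hTs hj, Finset.notMem_erase _ _⟩⟩
        rw [Finset.card_erase_of_mem hj, hTc]
        omega
      · rintro ⟨T, j⟩ hp
        simp only [Finset.mem_sigma] at hp
        have hjT : j ∉ T := (Finset.mem_sdiff.mp hp.2).2
        simp [Finset.erase_insert hjT]
      · rintro ⟨T', j⟩ hp
        simp only [Finset.mem_sigma] at hp
        simp [Finset.insert_erase hp.2]
      · rintro ⟨T, j⟩ hp
        simp
    rw [key]
    have card_eq : ∀ T' ∈ s.powersetCard (m + 1),
        ∑ j ∈ T', orderedProd T' g = (m + 1) • orderedProd T' g := by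
      intro T' hT'
      rw [Finset.sum_const, (Finset.mem_powersetCard.mp hT').2]
    rw [Finset.sum_congr rfl card_eq, ← Finset.smul_sum, smul_smul,
      Nat.factorial_succ, Nat.mul_comm (m + 1) m.factorial]

end Aux

/-- Expansion of `s' ∧ (∂̄ s')^(n-1)` (proofs of Lemma 3.6 and Theorem B):
`(∑ i, c i • ι (e i)) * (∑ i, ι (w i) * ι (e i)) ^ (n - 1)
  = (n-1)! • ∑ k, c k • (ι (e k) * ∏_{i ≠ k} (ι (w i) * ι (e i)))`. -/
theorem section_power_expansion {R M : Type*} [CommRing R] [AddCommGroup M] [Module R M]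
    {n : ℕ} (hn : 1 ≤ n) (c : Fin n → R) (w e : Fin n → M) :
    (∑ i : Fin n, c i • ι R (e i)) * (∑ i : Fin n, ι R (w i) * ι R (e i)) ^ (n - 1) =
      (n - 1).factorial •
        ∑ k : Fin n, c k •
          (ι R (e k) * orderedProd (Finset.univ.erase k) (fun i => ι R (w i) * ι R (e i))) := by
  set g : Fin n → ExteriorAlgebra R M := fun i => ι R (w i) * ι R (e i) with hg
  have swap : ∀ x y : M, ι R x * ι R y = -(ι R y * ι R x) := fun x y =>
    eq_neg_of_add_eq_zero_left (ι_add_mul_swap x y)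
  have hanti : ∀ (x : M) (i : Fin n), Commute (ι R x) (g i) := by
    intro x i
    show ι R x * (ι R (w i) * ι R (e i)) = (ι R (w i) * ι R (e i)) * ι R x
    calc ι R x * (ι R (w i) * ι R (e i))
        = (ι R x * ι R (w i)) * ι R (e i) := by rw [mul_assoc]
      _ = (-(ι R (w i) * ι R x)) * ι R (e i) := by rw [swap x (w i)]
      _ = -(ι R (w i) * (ι R x * ι R (e i))) := by rw [neg_mul, mul_assoc]
      _ = -(ι R (w i) * (-(ι R (e i) * ι R x))) := by rw [swap x (e i)]
      _ = ι R (w i) * (ι R (e i) * ι R x) := by rw [mul_neg, neg_neg]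
      _ = (ι R (w i) * ι R (e i)) * ι R x := by rw [mul_assoc]
  have hcomm : ∀ i j, Commute (g i) (g j) := by
    intro i j
    show g i * g j = g j * g i
    calc g i * g j = ι R (w i) * (ι R (e i) * g j) := mul_assoc _ _ _
      _ = ι R (w i) * (g j * ι R (e i)) := by rw [(hanti (e i) j).eq]
      _ = (ι R (w i) * g j) * ι R (e i) := (mul_assoc _ _ _).symm
      _ = (g j * ι R (w i)) * ι R (e i) := by rw [(hanti (w i) j).eq]
      _ = g j * g i := mul_assoc _ _ _
  have hsq : ∀ i, g i * g i = 0 := by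
    intro i
    show (ι R (w i) * ι R (e i)) * (ι R (w i) * ι R (e i)) = 0
    calc (ι R (w i) * ι R (e i)) * (ι R (w i) * ι R (e i))
        = ι R (w i) * ((ι R (e i) * ι R (w i)) * ι R (e i)) := by
          rw [mul_assoc, mul_assoc]
      _ = ι R (w i) * ((-(ι R (w i) * ι R (e i))) * ι R (e i)) := by rw [swap (e i) (w i)]
      _ = -(ι R (w i) * (ι R (w i) * (ι R (e i) * ι R (e i)))) := by
          rw [neg_mul, mul_neg, mul_assoc]
      _ = 0 := by rw [ι_sq_zero, mul_zero, mul_zero, neg_zero]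
  have hkill : ∀ (k j : Fin n), j ≠ k →
      ι R (e j) * orderedProd (Finset.univ.erase k) g = 0 := by
    intro k j hjk
    have hj : j ∈ Finset.univ.erase k := Finset.mem_erase.mpr ⟨hjk, Finset.mem_univ j⟩
    rw [orderedProd_erase hcomm hj, ← mul_assoc]
    have : ι R (e j) * g j = 0 := by
      show ι R (e j) * (ι R (w j) * ι R (e j)) = 0
      rw [← mul_assoc, swap (e j) (w j), neg_mul, mul_assoc, ι_sq_zero, mul_zero, neg_zero]
    rw [this, zero_mul]
  rw [sum_pow_sq_zero hcomm hsq, mul_smul_comm]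
  congr 1
  -- reindex subsets of size n-1 by the erased point
  have reindex : ∑ T ∈ Finset.univ.powersetCard (n - 1), orderedProd T g
      = ∑ k : Fin n, orderedProd (Finset.univ.erase k) g := by
    refine (Finset.sum_bij (fun k _ => Finset.univ.erase k) ?_ ?_ ?_ ?_).symm
    · intro k _
      refine Finset.mem_powersetCard.mpr ⟨Finset.subset_univ _, ?_⟩
      rw [Finset.card_erase_of_mem (Finset.mem_univ k), Finset.card_univ, Fintype.card_fin]
    · intro a _ b _ h
      have h' : Finset.univ.erase a = Finset.univ.erase b := h
      by_contra hab
      have : a ∈ Finset.univ.erase b := Finset.mem_erase.mpr ⟨hab, Finset.mem_univ a⟩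
      rw [← h'] at this
      exact (Finset.mem_erase.mp this).1 rfl
    · intro T hT
      obtain ⟨hTs, hTc⟩ := Finset.mem_powersetCard.mp hT
      have hcompl : Tᶜ.card = 1 := by
        rw [Finset.card_compl, hTc, Fintype.card_fin]
        omega
      obtain ⟨k, hk⟩ := Finset.card_eq_one.mp hcompl
      refine ⟨k, Finset.mem_univ k, ?_⟩
      show Finset.univ.erase k = T
      rw [← Finset.compl_singleton, ← hk, compl_compl]
    · intro k _; rfl
  rw [reindex, Finset.sum_mul_sum]
  rw [Finset.sum_comm]
  refine Finset.sum_congr rfl fun k _ => ?_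
  rw [Finset.sum_eq_single k]
  · rw [smul_mul_assoc]
  · intro j _ hjk
    rw [smul_mul_assoc, hkill k j hjk, smul_zero]
  · intro h; exact absurd (Finset.mem_univ k) h
end

section
/- Let A be a (not necessarily commutative) ring, s a finite set, and y : s → A a family of elements such that y_i and y_j commute for all i, j ∈ s and y_i^2 = 0 for all i ∈ s. Then for every natural number k, (∑_{i ∈ s} y_i)^k = k! • ∑_{t ⊆ s, |t| = k} ∏_{i ∈ t} y_i, where for each k-element subset t the product ∏_{i ∈ t} y_i is well defined because the factors pairwise commute. -/
private lemma sq_zero_add_pow {A : Type*} [Ring A] {x b : A} (hxb : Commute x b)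
    (hx : x ^ 2 = 0) (n : ℕ) :
    (x + b) ^ (n + 1) = b ^ (n + 1) + (n + 1) • (x * b ^ n) := by
  induction n with
  | zero => simp [add_comm]
  | succ n ih =>
    have hx2 : x * x = 0 := by rw [← sq]; exact hx
    have h1 : x * b ^ n * (x + b) = x * b ^ (n + 1) := by
      rw [mul_add, mul_assoc, (hxb.symm.pow_left n).eq, ← mul_assoc, hx2,
        zero_mul, zero_add, mul_assoc, ← pow_succ]
    calc (x + b) ^ (n + 1 + 1) = (x + b) ^ (n + 1) * (x + b) := by rw [pow_succ]
      _ = b ^ (n + 1) * (x + b) + (n + 1) • (x * b ^ n * (x + b)) := by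
          rw [ih, add_mul, smul_mul_assoc]
      _ = b ^ (n + 1) * x + b ^ (n + 1 + 1) + (n + 1) • (x * b ^ (n + 1)) := by
          rw [h1, mul_add, ← pow_succ]
      _ = b ^ (n + 1 + 1) + (n + 1 + 1) • (x * b ^ (n + 1)) := by
          rw [← (hxb.pow_right (n + 1)).eq, succ_nsmul (x * b ^ (n + 1)) (n + 1)]
          abel

private lemma aux_pow_sum {α : Type*} {A : Type*} [DecidableEq α] [Ring A] (y : α → A)
    (hc : ∀ i j, Commute (y i) (y j)) :
    ∀ (s : Finset α), (∀ i ∈ s, y i ^ 2 = 0) → ∀ k : ℕ,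
      (∑ i ∈ s, y i) ^ k =
        k.factorial • ∑ t ∈ Finset.powersetCard k s,
          t.noncommProd y (fun i _ j _ _ => hc i j) := by
  intro s
  induction s using Finset.induction_on with
  | empty =>
    intro _ k
    cases k with
    | zero => simp; exact (Finset.noncommProd_empty ..).symm
    | succ m =>
      rw [Finset.powersetCard_eq_empty.mpr (show (∅ : Finset α).card < m + 1 by
        simp)]
      simp
  | @insert a s ha ih =>
    intro hsq k
    have hsq' : ∀ i ∈ s, y i ^ 2 = 0 := fun i hi => hsq i (Finset.mem_insert_of_mem hi)
    have hsa : y a ^ 2 = 0 := hsq a (Finset.mem_insert_self a s)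
    cases k with
    | zero => simp; exact (Finset.noncommProd_empty ..).symm
    | succ m =>
      have hcomm : Commute (y a) (∑ i ∈ s, y i) :=
        Commute.sum_right _ _ _ (fun i _ => hc a i)
      rw [Finset.sum_insert ha, sq_zero_add_pow hcomm hsa m, ih hsq' (m + 1), ih hsq' m,
        Finset.powersetCard_succ_insert ha m]
      have hdisj : Disjoint (Finset.powersetCard (m + 1) s)
          ((Finset.powersetCard m s).image (insert a)) := by
        rw [Finset.disjoint_left]
        intro t ht ht'
        obtain ⟨u, hu, rfl⟩ := Finset.mem_image.mp ht'
        have := (Finset.mem_powersetCard.mp ht).1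
        exact ha (this (Finset.mem_insert_self a u))
      rw [Finset.sum_union hdisj]
      have himg : ∑ t ∈ (Finset.powersetCard m s).image (insert a),
          t.noncommProd y (fun i _ j _ _ => hc i j)
          = ∑ t ∈ Finset.powersetCard m s,
            y a * t.noncommProd y (fun i _ j _ _ => hc i j) := by
        rw [Finset.sum_image]
        · refine Finset.sum_congr rfl fun t ht => ?_
          have hat : a ∉ t := fun h =>
            ha ((Finset.mem_powersetCard.mp ht).1 h)
          exact Finset.noncommProd_insert_of_notMem _ _ _ _ hat
        · intro t ht u hu h
          have hat : a ∉ t := fun h' => ha ((Finset.mem_powersetCard.mp ht).1 h')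
          have hau : a ∉ u := fun h' => ha ((Finset.mem_powersetCard.mp hu).1 h')
          rw [← Finset.erase_insert hat, ← Finset.erase_insert hau, h]
      rw [himg, smul_add]
      congr 1
      rw [mul_smul_comm, smul_smul, ← Finset.mul_sum, Nat.factorial_succ]

/-- Multinomial expansion for pairwise commuting square-zero elements:
`(∑ i ∈ s, y i) ^ k = k! • ∑_{t ⊆ s, |t| = k} ∏_{i ∈ t} y i`. -/
theorem pow_sum_of_sq_zero {α : Type*} (A : Type*) [Ring A]
    (s : Finset α) (y : s → A)
    (hc : ∀ i j : s, Commute (y i) (y j))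
    (hsq : ∀ i : s, y i ^ 2 = 0) (k : ℕ) :
    (∑ i : s, y i) ^ k =
      k.factorial •
        ∑ t ∈ Finset.powersetCard k (Finset.univ : Finset s),
          t.noncommProd y (fun i _ j _ _ => hc i j) := by
  classical
  exact aux_pow_sum y hc Finset.univ (fun i _ => hsq i) k
end

section
/- Let R be a commutative ring, M an R-module, and ι : M → Λ(M) the canonical inclusion into the exterior algebra. Let n ≥ 1, let A be an n × n matrix over R, and let y : Fin n → R and w, e : Fin n → M. Define s = ∑_i y_i • ι(e_i), t = ∑_i ι(w_i) * ι(e_i), s_A = ∑_i (∑_j A_{ij} y_j) • ι(e_i), and t_A = ∑_i ∑_j A_{ij} • (ι(w_j) * ι(e_i)). Then s_A * t_A^{n−1} = det(A) • (s * t^{n−1}). -/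
open ExteriorAlgebra

set_option maxHeartbeats 1000000


open ExteriorAlgebra

section CommRingLemmas

variable {C : Type*} [CommRing C]

private lemma sq_zero_add_pow_s7 (x y : C) (hx : x * x = 0) (m : ℕ) :
    (x + y) ^ (m + 1) = y ^ (m + 1) + ((m : C) + 1) * (x * y ^ m) := by
  induction m with
  | zero => push_cast; ring
  | succ m ih =>
      have h : (x + y) ^ (m + 1 + 1) = (x + y) ^ (m + 1) * (x + y) := by ring
      rw [h, ih]
      push_cast
      linear_combination ((m : C) + 1) * y ^ m * hx

private lemma sum_sq_zero_pow_card {ι : Type*} [DecidableEq ι] (S : Finset ι) (b : ι → C)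
    (hb : ∀ k ∈ S, b k * b k = 0) :
    (∑ k ∈ S, b k) ^ S.card = (S.card.factorial : C) * ∏ k ∈ S, b k := by
  induction S using Finset.induction_on with
  | empty => simp
  | @insert j S hj ih =>
      have hbS : ∀ k ∈ S, b k * b k = 0 := fun k hk => hb k (Finset.mem_insert_of_mem hk)
      have ihS := ih hbS
      have hbj : b j * b j = 0 := hb j (Finset.mem_insert_self _ _)
      rw [Finset.sum_insert hj, Finset.card_insert_of_notMem hj,
        sq_zero_add_pow_s7 (b j) _ hbj S.card]
      have h1 : (∑ k ∈ S, b k) ^ (S.card + 1) = 0 := by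
        rw [pow_succ, ihS, mul_assoc, Finset.mul_sum]
        have h2 : ∀ k ∈ S, (∏ x ∈ S, b x) * b k = 0 := by
          intro k hk
          rw [← Finset.mul_prod_erase S b hk]
          have : b k * (∏ x ∈ S.erase k, b x) * b k
              = b k * b k * ∏ x ∈ S.erase k, b x := by ring
          rw [this, hbS k hk, zero_mul]
        rw [Finset.sum_eq_zero h2, mul_zero]
      rw [h1, zero_add, ihS, Finset.prod_insert hj, Nat.factorial_succ]
      push_cast
      ring

private lemma comm_key {n : ℕ} (a : C) (b : Fin n → C) (hb : ∀ k, b k * b k = 0)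
    (i : Fin n) (hab : a * b i = 0) :
    a * (∑ k, b k) ^ (n - 1) =
      ((n - 1).factorial : C) * (a * ∏ k ∈ Finset.univ.erase i, b k) := by
  classical
  have hsplit : (∑ k, b k) = b i + ∑ k ∈ Finset.univ.erase i, b k :=
    (Finset.add_sum_erase _ b (Finset.mem_univ i)).symm
  have hcard : (Finset.univ.erase i).card = n - 1 := by
    rw [Finset.card_erase_of_mem (Finset.mem_univ i)]
    simp
  have key : ∀ m : ℕ,
      a * (b i + ∑ k ∈ Finset.univ.erase i, b k) ^ m
        = a * (∑ k ∈ Finset.univ.erase i, b k) ^ m := by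
    intro m
    induction m with
    | zero => rw [pow_zero, pow_zero]
    | succ m ih =>
        rw [pow_succ, ← mul_assoc, ih, mul_add, pow_succ, ← mul_assoc]
        have : a * (∑ k ∈ Finset.univ.erase i, b k) ^ m * b i
            = a * b i * (∑ k ∈ Finset.univ.erase i, b k) ^ m := by ring
        rw [this, hab, zero_mul, zero_add]
  rw [hsplit, key, ← hcard,
    sum_sq_zero_pow_card _ _ (fun k _ => hb k)]
  ring

end CommRingLemmas

section ExtLemmas

variable {R : Type*} {M : Type*} [CommRing R] [AddCommGroup M] [Module R M]

private lemma iota_swap (x y : M) : ι R x * ι R y = -(ι R y * ι R x) :=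
  eq_neg_of_add_eq_zero_left (ι_add_mul_swap x y)

private lemma iota_comm_block (x y z : M) :
    Commute (ι R x) (ι R y * ι R z) := by
  show ι R x * (ι R y * ι R z) = ι R y * ι R z * ι R x
  rw [← mul_assoc, iota_swap x y, neg_mul, mul_assoc, iota_swap x z, mul_neg, neg_neg,
    ← mul_assoc]

private lemma block_comm_block (x y z w : M) :
    Commute (ι R x * ι R y) (ι R z * ι R w) :=
  ((iota_comm_block x z w).mul_left (iota_comm_block y z w))

private lemma smul_comm_block (r : R) (x y z : M) :
    Commute (r • ι R x) (ι R y * ι R z) :=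
  (iota_comm_block x y z).smul_left r

private lemma block_sq_zero (x y : M) : (ι R x * ι R y) * (ι R x * ι R y) = 0 := by
  rw [mul_assoc, ← mul_assoc (ι R y), iota_swap y x, neg_mul, mul_neg, ← mul_assoc,
    ← mul_assoc, ι_sq_zero, zero_mul, zero_mul, neg_zero]

private lemma blocks_same_mid (x e₁ e₂ : M) :
    (ι R x * ι R e₁) * (ι R x * ι R e₂) = 0 := by
  rw [mul_assoc, ← mul_assoc (ι R e₁), iota_swap e₁ x, neg_mul, mul_neg, ← mul_assoc,
    ← mul_assoc, ι_sq_zero, zero_mul, zero_mul, neg_zero]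

private lemma smul_mul_block_self (r : R) (x e₁ : M) :
    (r • ι R e₁) * (ι R x * ι R e₁) = 0 := by
  rw [smul_mul_assoc, ← mul_assoc, iota_swap e₁ x, neg_mul, mul_assoc, ι_sq_zero, mul_zero,
    neg_zero, smul_zero]

private lemma cross_cancel (r : R) (x e₁ e₂ : M) :
    (r • ι R e₁) * (ι R x * ι R e₂) + (r • ι R e₂) * (ι R x * ι R e₁) = 0 := by
  rw [smul_mul_assoc, smul_mul_assoc, ← smul_add]
  have h1 : ι R e₁ * (ι R x * ι R e₂) = -(ι R x * (ι R e₁ * ι R e₂)) := by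
    rw [← mul_assoc, iota_swap e₁ x, neg_mul, mul_assoc]
  have h2 : ι R e₂ * (ι R x * ι R e₁) = -(ι R x * (ι R e₂ * ι R e₁)) := by
    rw [← mul_assoc, iota_swap e₂ x, neg_mul, mul_assoc]
  rw [h1, h2, ← neg_add, ← mul_add, ι_add_mul_swap, mul_zero, neg_zero, smul_zero]

/-- Transport a `List.ofFn` product of subalgebra elements to a `Finset.prod`
inside the subalgebra. -/
private lemma listProd_coe {A : Type*} [Semiring A] [Algebra R A] (S : Subalgebra R A)
    {n : ℕ} (g : Fin n → S) :
    (List.ofFn fun k => (g k : A)).prod = ((List.ofFn g).prod : S) := by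
  calc (List.ofFn fun k => S.val (g k)).prod
      = ((List.ofFn g).map S.val).prod := by rw [List.map_ofFn]; rfl
    _ = S.val (List.ofFn g).prod := (map_list_prod S.val _).symm

/-- Key factorial identity: `a * (∑ b)^(n-1) = (n-1)! • (ordered product with `a` in slot `i`)`,
for commuting square-zero blocks. -/
private lemma prod_aux {n : ℕ} (a : ExteriorAlgebra R M) (b : Fin n → ExteriorAlgebra R M)
    (hab : ∀ k, Commute a (b k)) (hbb : ∀ k l, Commute (b k) (b l))
    (hb2 : ∀ k, b k * b k = 0) (i : Fin n) (hab0 : a * b i = 0) :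
    a * (∑ k, b k) ^ (n - 1) =
      ((n - 1).factorial : ℕ) • (List.ofFn fun k => if k = i then a else b k).prod := by
  classical
  set s : Set (ExteriorAlgebra R M) := insert a (Set.range b) with hs
  have hcomm : ∀ x ∈ s, ∀ y ∈ s, x * y = y * x := by
    rintro x hx y hy
    simp only [hs, Set.mem_insert_iff, Set.mem_range] at hx hy
    rcases hx with rfl | ⟨k, rfl⟩ <;> rcases hy with rfl | ⟨l, rfl⟩
    · rfl
    · exact (hab l).eq
    · exact ((hab k).symm).eq
    · exact (hbb k l).eq
  letI : CommRing (Algebra.adjoin R s) := Algebra.adjoinCommRingOfComm R hcomm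
  have haS : a ∈ Algebra.adjoin R s := Algebra.subset_adjoin (Set.mem_insert _ _)
  have hbS : ∀ k, b k ∈ Algebra.adjoin R s := fun k =>
    Algebra.subset_adjoin (Set.mem_insert_of_mem _ ⟨k, rfl⟩)
  set a' : Algebra.adjoin R s := ⟨a, haS⟩ with ha'
  set b' : Fin n → Algebra.adjoin R s := fun k => ⟨b k, hbS k⟩ with hb'
  have hb2' : ∀ k, b' k * b' k = 0 := fun k => Subtype.ext (by simpa using hb2 k)
  have hab0' : a' * b' i = 0 := Subtype.ext (by simpa using hab0)
  have main := comm_key a' b' hb2' i hab0'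
  have hval := congrArg (Subtype.val) main
  have hlist : (List.ofFn fun k => if k = i then a else b k).prod
      = ((∏ k, (if k = i then a' else b' k) : Algebra.adjoin R s) : ExteriorAlgebra R M) := by
    have h1 : (List.ofFn fun k => if k = i then a else b k)
        = List.ofFn (fun k => (((if k = i then a' else b' k) : Algebra.adjoin R s) :
            ExteriorAlgebra R M)) := by
      congr 1
      funext k
      by_cases h : k = i <;> simp [h, ha', hb']
    rw [h1, listProd_coe, List.prod_ofFn]
  have h2 : (∏ k, (if k = i then a' else b' k))
      = a' * ∏ k ∈ Finset.univ.erase i, b' k := by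
    rw [← Finset.mul_prod_erase Finset.univ _ (Finset.mem_univ i), if_pos rfl]
    congr 1
    exact Finset.prod_congr rfl fun k hk => if_neg (Finset.ne_of_mem_erase hk)
  rw [hlist, h2]
  -- now both sides are values of subalgebra computations
  simp only [MulMemClass.coe_mul, SubmonoidClass.coe_pow, AddSubmonoidClass.coe_finset_sum] at hval ⊢
  rw [hval, nsmul_eq_mul]
  push_cast
  ring_nf
/-- Extract two slots out of an ordered product of pairwise commuting factors. -/
private lemma prod_extract {n : ℕ} (f : Fin n → ExteriorAlgebra R M)
    (hcomm : ∀ k l, Commute (f k) (f l)) (i j : Fin n) (hij : i ≠ j) :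
    (List.ofFn f).prod =
      f i * f j * (List.ofFn fun k => if k = i ∨ k = j then 1 else f k).prod := by
  classical
  set s : Set (ExteriorAlgebra R M) := Set.range f with hs
  have hcomm' : ∀ x ∈ s, ∀ y ∈ s, x * y = y * x := by
    rintro x hx y hy
    simp only [hs, Set.mem_range] at hx hy
    obtain ⟨k, rfl⟩ := hx
    obtain ⟨l, rfl⟩ := hy
    exact (hcomm k l).eq
  letI : CommRing (Algebra.adjoin R s) := Algebra.adjoinCommRingOfComm R hcomm'
  have hfS : ∀ k, f k ∈ Algebra.adjoin R s := fun k => Algebra.subset_adjoin ⟨k, rfl⟩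
  set f' : Fin n → Algebra.adjoin R s := fun k => ⟨f k, hfS k⟩ with hf'
  have hL1 : (List.ofFn f).prod = ((∏ k, f' k : Algebra.adjoin R s) : ExteriorAlgebra R M) := by
    have h1 : List.ofFn f = List.ofFn (fun k => ((f' k : Algebra.adjoin R s) :
        ExteriorAlgebra R M)) := rfl
    rw [h1, listProd_coe, List.prod_ofFn]
  have hL2 : (List.ofFn fun k => if k = i ∨ k = j then 1 else f k).prod
      = ((∏ k, (if k = i ∨ k = j then 1 else f' k) : Algebra.adjoin R s) :
          ExteriorAlgebra R M) := by
    have h1 : (List.ofFn fun k => if k = i ∨ k = j then 1 else f k)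
        = List.ofFn (fun k => (((if k = i ∨ k = j then 1 else f' k) : Algebra.adjoin R s) :
            ExteriorAlgebra R M)) := by
      congr 1
      funext k
      by_cases h : k = i ∨ k = j <;> simp [h, hf']
    rw [h1, listProd_coe, List.prod_ofFn]
  have hjmem : j ∈ Finset.univ.erase i := Finset.mem_erase.2 ⟨Ne.symm hij, Finset.mem_univ j⟩
  have key : (∏ k, f' k) = f' i * f' j *
      ∏ k, (if k = i ∨ k = j then 1 else f' k) := by
    have hsub : (Finset.univ.erase i).erase j ⊆ Finset.univ := Finset.subset_univ _
    have hone : ∀ x ∈ Finset.univ, x ∉ (Finset.univ.erase i).erase j →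
        (if x = i ∨ x = j then 1 else f' x) = 1 := by
      intro x _ hx
      simp only [Finset.mem_erase, Finset.mem_univ, and_true, not_and_or, not_not] at hx
      rcases hx with h | h
      · rw [if_pos (Or.inr h)]
      · rw [if_pos (Or.inl h)]
    rw [← Finset.prod_subset hsub hone]
    have hcongr : ∏ k ∈ (Finset.univ.erase i).erase j, (if k = i ∨ k = j then 1 else f' k)
        = ∏ k ∈ (Finset.univ.erase i).erase j, f' k := by
      refine Finset.prod_congr rfl fun k hk => ?_
      simp only [Finset.mem_erase] at hk
      rw [if_neg]
      push_neg
      exact ⟨hk.2.1, hk.1⟩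
    rw [hcongr, ← Finset.mul_prod_erase Finset.univ f' (Finset.mem_univ i),
      ← Finset.mul_prod_erase (Finset.univ.erase i) f' hjmem, ← mul_assoc]
  rw [hL1, hL2, key]
  push_cast
  rfl

/-- The sum of the slot-`i₀` products vanishes when two inputs coincide. -/
private lemma alt_sum_zero {n : ℕ} (a b : Fin n → ExteriorAlgebra R M) (i j : Fin n)
    (hij : i ≠ j)
    (hbb : ∀ k l, Commute (b k) (b l)) (hab : ∀ k l, Commute (a k) (b l))
    (hbb0 : b i * b j = 0)
    (hcross : a i * b j + a j * b i = 0) :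
    ∑ i₀ : Fin n, (List.ofFn fun k => if k = i₀ then a k else b k).prod = 0 := by
  classical
  have hcommP : ∀ i₀ : Fin n, ∀ k l : Fin n,
      Commute (if k = i₀ then a k else b k) (if l = i₀ then a l else b l) := by
    intro i₀ k l
    by_cases hk : k = i₀ <;> by_cases hl : l = i₀
    · subst hk; subst hl; exact Commute.refl _
    · subst hk; rw [if_pos rfl, if_neg hl]; exact hab k l
    · subst hl; rw [if_pos rfl, if_neg hk]; exact (hab l k).symm
    · rw [if_neg hk, if_neg hl]; exact hbb k l
  have hP : ∀ i₀ : Fin n, i₀ ≠ i → i₀ ≠ j →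
      (List.ofFn fun k => if k = i₀ then a k else b k).prod = 0 := by
    intro i₀ h1 h2
    rw [prod_extract _ (hcommP i₀) i j hij, if_neg (Ne.symm h1), if_neg (Ne.symm h2), hbb0,
      zero_mul]
  have hsub : ({i, j} : Finset (Fin n)) ⊆ Finset.univ := Finset.subset_univ _
  rw [← Finset.sum_subset hsub (fun x _ hx => by
    simp only [Finset.mem_insert, Finset.mem_singleton] at hx
    push_neg at hx
    exact hP x hx.1 hx.2)]
  rw [Finset.sum_pair hij]
  rw [prod_extract _ (hcommP i) i j hij, prod_extract _ (hcommP j) i j hij]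
  have e1 : (if i = i then a i else b i) = a i := if_pos rfl
  have e2 : (if j = i then a j else b j) = b j := if_neg (Ne.symm hij)
  have e3 : (if i = j then a i else b i) = b i := if_neg hij
  have e4 : (if j = j then a j else b j) = a j := if_pos rfl
  rw [e1, e2, e3, e4]
  have hrest : (fun k => if k = i ∨ k = j then 1 else if k = i then a k else b k)
      = (fun k : Fin n => if k = i ∨ k = j then 1 else if k = j then a k else b k) := by
    funext k
    by_cases h : k = i ∨ k = j
    · rw [if_pos h, if_pos h]
    · push_neg at h
      simp [h.1, h.2]
  rw [hrest, ← add_mul]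
  have : a i * b j + b i * a j = 0 := by rw [← (hab j i).eq]; exact hcross
  rw [this, zero_mul]

end ExtLemmas

section DetLemma

variable {R : Type*} [CommRing R]

/-- Any module-valued alternating map transforms by the determinant under a matrix action. -/
private lemma alt_map_det {N P : Type*} [AddCommGroup N] [Module R N] [AddCommGroup P]
    [Module R P] {n : ℕ} (f : N [⋀^Fin n]→ₗ[R] P) (A : Matrix (Fin n) (Fin n) R)
    (v : Fin n → N) :
    f (fun i => ∑ j, A i j • v j) = A.det • f v := by
  classical
  have h1 : f (fun i => ∑ j, A i j • v j)
      = ∑ r : Fin n → Fin n, (∏ i, A i (r i)) • f (fun i => v (r i)) := by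
    have := f.toMultilinearMap.map_sum (α := fun _ : Fin n => Fin n)
      (g := fun i j => A i j • v j)
    simp only [AlternatingMap.coe_multilinearMap] at this
    rw [this]
    refine Finset.sum_congr rfl fun r _ => ?_
    have := f.toMultilinearMap.map_smul_univ (fun i => A i (r i)) (fun i => v (r i))
    simpa using this
  rw [h1, ← Finset.sum_filter_add_sum_filter_not Finset.univ Function.Bijective]
  have h2 : ∑ r ∈ Finset.univ.filter (fun r : Fin n → Fin n => ¬ Function.Bijective r),
      (∏ i, A i (r i)) • f (fun i => v (r i)) = 0 := by
    refine Finset.sum_eq_zero fun r hr => ?_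
    have hnb : ¬ Function.Bijective r := (Finset.mem_filter.1 hr).2
    have hni : ¬ Function.Injective r := fun h => hnb (Finite.injective_iff_bijective.1 h)
    obtain ⟨k, l, hkl, hne⟩ := Function.not_injective_iff.1 hni
    rw [f.map_eq_zero_of_eq (i := k) (j := l) (fun i => v (r i))
      (show v (r k) = v (r l) from congrArg v hkl) hne, smul_zero]
  rw [h2, add_zero]
  have h3 : ∑ r ∈ Finset.univ.filter (fun r : Fin n → Fin n => Function.Bijective r),
      (∏ i, A i (r i)) • f (fun i => v (r i))
      = ∑ σ : Equiv.Perm (Fin n), (∏ i, A i (σ i)) • f (fun i => v (σ i)) := by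
    refine (Finset.sum_bij (fun (σ : Equiv.Perm (Fin n)) _ => (σ : Fin n → Fin n))
      ?_ ?_ ?_ ?_).symm
    · intro σ _
      exact Finset.mem_filter.2 ⟨Finset.mem_univ _, σ.bijective⟩
    · intro σ₁ _ σ₂ _ h
      exact Equiv.coe_fn_injective h
    · intro r hr
      exact ⟨Equiv.ofBijective r (Finset.mem_filter.1 hr).2, Finset.mem_univ _, rfl⟩
    · intro σ _
      rfl
  rw [h3]
  have h4 : ∀ σ : Equiv.Perm (Fin n), f (fun i => v (σ i))
      = ((Equiv.Perm.sign σ : ℤ) : R) • f v := by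
    intro σ
    have := f.map_perm v σ
    rw [show (v ∘ ⇑σ) = fun i => v (σ i) from rfl] at this
    rw [this, Units.smul_def, Int.cast_smul_eq_zsmul]
  have h5 : A.det = ∑ σ : Equiv.Perm (Fin n),
      ((Equiv.Perm.sign σ : ℤ) : R) * ∏ i, A i (σ i) := by
    rw [← Matrix.det_transpose, Matrix.det_apply']
    rfl
  rw [h5, Finset.sum_smul]
  refine Finset.sum_congr rfl fun σ _ => ?_
  rw [h4 σ, smul_smul, mul_comm]

end DetLemma

section Main

variable {R : Type*} {M : Type*} [CommRing R] [AddCommGroup M] [Module R M]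

private def La (e : Fin n → M) (i : Fin n) : (R × M) →ₗ[R] ExteriorAlgebra R M :=
  (LinearMap.fst R R M).smulRight (ι R (e i))

private def Lb (e : Fin n → M) (i : Fin n) : (R × M) →ₗ[R] ExteriorAlgebra R M :=
  (LinearMap.mulRight R (ι R (e i))).comp ((ι R).comp (LinearMap.snd R R M))

private def Gmap (e : Fin n → M) :
    MultilinearMap R (fun _ : Fin n => R × M) (ExteriorAlgebra R M) :=
  ∑ i : Fin n, (MultilinearMap.mkPiAlgebraFin R n _).compLinearMap
    (fun k => if k = i then La e k else Lb e k)

private lemma Gmap_apply (e : Fin n → M) (u : Fin n → R × M) :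
    Gmap e u = ∑ i₀ : Fin n, (List.ofFn fun k =>
      if k = i₀ then (u k).1 • ι R (e k) else ι R (u k).2 * ι R (e k)).prod := by
  classical
  rw [Gmap, MultilinearMap.sum_apply]
  refine Finset.sum_congr rfl fun i₀ _ => ?_
  rw [MultilinearMap.compLinearMap_apply, MultilinearMap.mkPiAlgebraFin_apply]
  congr 1
  congr 1
  funext k
  by_cases h : k = i₀ <;> simp [h, La, Lb]

private lemma GAlt_aux (e : Fin n → M) (u : Fin n → R × M) {i j : Fin n}
    (h : u i = u j) (hij : i ≠ j) : Gmap e u = 0 := by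
  rw [Gmap_apply]
  refine alt_sum_zero (fun k => (u k).1 • ι R (e k)) (fun k => ι R (u k).2 * ι R (e k))
    i j hij (fun k l => block_comm_block _ _ _ _) (fun k l => smul_comm_block _ _ _ _) ?_ ?_
  · show ι R (u i).2 * ι R (e i) * (ι R (u j).2 * ι R (e j)) = 0
    rw [h]
    exact blocks_same_mid _ _ _
  · show (u i).1 • ι R (e i) * (ι R (u j).2 * ι R (e j)) +
        (u j).1 • ι R (e j) * (ι R (u i).2 * ι R (e i)) = 0
    rw [h]
    exact cross_cancel _ _ _ _

private def GAlt (e : Fin n → M) : (R × M) [⋀^Fin n]→ₗ[R] (ExteriorAlgebra R M) :=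
  { Gmap e with
    map_eq_zero_of_eq' := fun u _ _ h hij => GAlt_aux e u h hij }

private lemma keyId (e : Fin n → M) (u : Fin n → R × M) :
    (∑ i, (u i).1 • ι R (e i)) * (∑ i, ι R (u i).2 * ι R (e i)) ^ (n - 1) =
      (n - 1).factorial • Gmap e u := by
  classical
  rw [Finset.sum_mul, Gmap_apply, Finset.smul_sum]
  refine Finset.sum_congr rfl fun i _ => ?_
  have hfix : (fun k => if k = i then (u k).1 • ι R (e k) else ι R (u k).2 * ι R (e k))
      = (fun k : Fin n => if k = i then (u i).1 • ι R (e i) else ι R (u k).2 * ι R (e k)) := by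
    funext k
    by_cases h : k = i
    · subst h; rfl
    · simp [h]
  rw [hfix]
  exact prod_aux ((u i).1 • ι R (e i)) (fun k => ι R (u k).2 * ι R (e k))
    (fun k => smul_comm_block _ _ _ _) (fun k l => block_comm_block _ _ _ _)
    (fun k => block_sq_zero _ _) i (smul_mul_block_self _ _ _)

end Main

/-- Determinant transformation rule from the proof of Theorem 5.1: with
`s = ∑ i, y i • ι (e i)`, `t = ∑ i, ι (w i) * ι (e i)`,
`s_A = ∑ i, (∑ j, A i j * y j) • ι (e i)` and
`t_A = ∑ i, ∑ j, A i j • (ι (w j) * ι (e i))`, one has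
`s_A * t_A ^ (n - 1) = det A • (s * t ^ (n - 1))`. -/
theorem det_transformation_rule {R M : Type*} [CommRing R] [AddCommGroup M] [Module R M]
    {n : ℕ} (hn : 1 ≤ n) (A : Matrix (Fin n) (Fin n) R) (y : Fin n → R) (w e : Fin n → M) :
    (∑ i : Fin n, (∑ j : Fin n, A i j * y j) • ι R (e i)) *
        (∑ i : Fin n, ∑ j : Fin n, A i j • (ι R (w j) * ι R (e i))) ^ (n - 1) =
      A.det •
        ((∑ i : Fin n, y i • ι R (e i)) *
          (∑ i : Fin n, ι R (w i) * ι R (e i)) ^ (n - 1)) := by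
  
  classical
  set u0 : Fin n → R × M := fun j => (y j, w j) with h_u0
  set uA : Fin n → R × M := fun i => ∑ j, A i j • u0 j with huA
  have h1 : ∀ i, (uA i).1 = ∑ j, A i j * y j := by
    intro i
    simp [huA, h_u0, Prod.fst_sum, smul_eq_mul]
  have h2 : ∀ i, (uA i).2 = ∑ j, A i j • w j := by
    intro i
    simp [huA, h_u0, Prod.snd_sum]
  have hL : (∑ i : Fin n, (∑ j : Fin n, A i j * y j) • ι R (e i))
      = ∑ i, (uA i).1 • ι R (e i) := by
    refine Finset.sum_congr rfl fun i _ => ?_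
    rw [h1]
  have hT : (∑ i : Fin n, ∑ j : Fin n, A i j • (ι R (w j) * ι R (e i)))
      = ∑ i, ι R (uA i).2 * ι R (e i) := by
    refine Finset.sum_congr rfl fun i _ => ?_
    rw [h2, map_sum, Finset.sum_mul]
    refine Finset.sum_congr rfl fun j _ => ?_
    rw [LinearMap.map_smul, smul_mul_assoc]
  have hdet : Gmap e uA = A.det • Gmap e u0 := alt_map_det (GAlt e) A u0
  have hRHS : (∑ i : Fin n, y i • ι R (e i)) * (∑ i : Fin n, ι R (w i) * ι R (e i)) ^ (n - 1)
      = (n - 1).factorial • Gmap e u0 := by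
    have := keyId e u0
    simpa [h_u0] using this
  rw [hL, hT, keyId e uA, hdet, hRHS, smul_comm]
end
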